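/- arXiv:1212.5895 — 2 statements merged into one kernel-verified Lean document; each statement's English description precedes it below -/
import Mathlib

section
/- If P is a normal program over 𝒰, then the shifted transformation tr(P)^→ is a super-coherent normal program and AS(P) = { M ∩ 𝒰 : M ∈ AS(tr(P)^→) and fail ∉ M }. -/
structure Rule (A : Type) where
  head : Set A
  pos : Set A
  neg : Set A

abbrev Program (A : Type) := Set (Rule A)

def satRule {A : Type} (I : Set A) (r : Rule A) : Prop :=
  r.pos ⊆ I → r.neg ∩ I = ∅ → (r.head ∩ I).Nonempty

def isModel {A : Type} (P : Program A) (I : Set A) : Prop := ∀ r ∈ P, satRule I r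

def reduct {A : Type} (P : Program A) (K : Set A) : Program A :=
  {r' | ∃ r ∈ P, r.neg ∩ K = ∅ ∧ r' = ⟨r.head, r.pos, ∅⟩}

def isAnswerSet {A : Type} (P : Program A) (M : Set A) : Prop :=
  isModel (reduct P M) M ∧ ∀ N ⊆ M, isModel (reduct P M) N → N = M

def factsOf {A : Type} (F : Set A) : Program A := {r | ∃ a ∈ F, r = ⟨{a}, ∅, ∅⟩}

def superCoherent {A : Type} (P : Program A) : Prop :=
  ∀ F : Set A, ∃ M, isAnswerSet (P ∪ factsOf F) M

def atomsOf {A : Type} (P : Program A) : Set A :=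
  ⋃ r ∈ P, (r.head ∪ r.pos ∪ r.neg)

/-- Atoms of the transformed program: the original universe 𝒰, plus fresh atoms
α^T, α^F for each α ∈ 𝒰, plus the fresh atom `fail`. -/
inductive TAtom (A : Type) : Type
  | base : A → TAtom A
  | t : A → TAtom A
  | f : A → TAtom A
  | fail : TAtom A

/-- The transformation tr(P): each rule r of P becomes the positive rule
H(r) ← B+(r), {α^F : α ∈ B-(r)}; in addition, for each atom α, the rules
α^T ∨ α^F ← ;  α^T ← α ;  fail ← α^T, not α. -/
def trProg {A : Type} (P : Program A) : Program (TAtom A) :=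
  {r' | ∃ r ∈ P, r' = ⟨TAtom.base '' r.head, TAtom.base '' r.pos ∪ TAtom.f '' r.neg, ∅⟩} ∪
  {r' | ∃ a : A, r' = ⟨{TAtom.t a, TAtom.f a}, ∅, ∅⟩ ∨
        r' = ⟨{TAtom.t a}, {TAtom.base a}, ∅⟩ ∨
        r' = ⟨{TAtom.fail}, {TAtom.t a}, {TAtom.base a}⟩}

/-- p depends on q (positively or negatively). -/
def depends {A : Type} (P : Program A) (p q : A) : Prop :=
  ∃ r ∈ P, p ∈ r.head ∧ (q ∈ r.pos ∨ q ∈ r.neg)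

/-- p depends negatively on q. -/
def dependsNeg {A : Type} (P : Program A) (p q : A) : Prop :=
  ∃ r ∈ P, p ∈ r.head ∧ q ∈ r.neg

/-- A program is stratified if no cycle of dependencies contains a negative edge. -/
def Stratified {A : Type} (P : Program A) : Prop :=
  ∀ p q, dependsNeg P p q → ¬ Relation.ReflTransGen (depends P) q p

/-- The shift P^→ of a program P. -/
def shiftProg {A : Type} (P : Program A) : Program A :=
  {r ∈ P | r.head = ∅} ∪
  {r' | ∃ r ∈ P, ∃ a ∈ r.head, r' = ⟨{a}, r.pos, r.neg ∪ (r.head \ {a})⟩}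

/-- Positive dependency relation. -/
def posDep {A : Type} (P : Program A) (p q : A) : Prop :=
  ∃ r ∈ P, p ∈ r.head ∧ q ∈ r.pos

/-- P is head-cycle free if no two distinct atoms jointly occurring in some rule
head depend positively and mutually on each other. -/
def headCycleFree {A : Type} (P : Program A) : Prop :=
  ∀ r ∈ P, ∀ a ∈ r.head, ∀ b ∈ r.head, a ≠ b →
    ¬ (Relation.ReflTransGen (posDep P) a b ∧ Relation.ReflTransGen (posDep P) b a)

section Aux

variable {A : Type}

/-- Characterization of membership in `shiftProg (trProg P)` for normal `P`. -/
lemma mem_shift_tr (P : Program A) (hn : ∀ r ∈ P, ∃ a, r.head = {a}) (r' : Rule (TAtom A)) :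
    r' ∈ shiftProg (trProg P) ↔
      (∃ r ∈ P, ∃ a, r.head = {a} ∧
        r' = ⟨{TAtom.base a}, TAtom.base '' r.pos ∪ TAtom.f '' r.neg, ∅⟩) ∨
      (∃ a : A, r' = ⟨{TAtom.t a}, ∅, {TAtom.f a}⟩ ∨ r' = ⟨{TAtom.f a}, ∅, {TAtom.t a}⟩ ∨
        r' = ⟨{TAtom.t a}, {TAtom.base a}, ∅⟩ ∨
        r' = ⟨{TAtom.fail}, {TAtom.t a}, {TAtom.base a}⟩) := by
  constructor
  · rintro (⟨hmem, hhead⟩ | ⟨r, hmem, a0, ha0, rfl⟩)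
    · -- empty-head rules: impossible
      exfalso
      rcases hmem with ⟨r, hr, rfl⟩ | ⟨a, h | h | h⟩
      · obtain ⟨a, ha⟩ := hn r hr
        simp [ha] at hhead
      all_goals subst h
      all_goals simp only [Set.eq_empty_iff_forall_notMem] at hhead
      · exact hhead (TAtom.t a) (Or.inl rfl)
      · exact hhead (TAtom.t a) rfl
      · exact hhead TAtom.fail rfl
    · rcases hmem with ⟨r0, hr0, rfl⟩ | ⟨a, h | h | h⟩
      · left
        obtain ⟨a, ha⟩ := hn r0 hr0
        simp only [ha, Set.image_singleton, Set.mem_singleton_iff] at ha0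
        subst ha0
        refine ⟨r0, hr0, a, ha, ?_⟩
        simp [ha]
      · subst h
        right; refine ⟨a, ?_⟩
        simp only [Set.mem_insert_iff, Set.mem_singleton_iff] at ha0
        rcases ha0 with rfl | rfl
        · left
          have : ({TAtom.t a, TAtom.f a} : Set (TAtom A)) \ {TAtom.t a} = {TAtom.f a} := by
            ext x; simp
          simp [this]
        · right; left
          have : ({TAtom.t a, TAtom.f a} : Set (TAtom A)) \ {TAtom.f a} = {TAtom.t a} := by
            ext x; simp
          simp [this]
      · subst h
        simp only [Set.mem_singleton_iff] at ha0; subst ha0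
        right; exact ⟨a, Or.inr (Or.inr (Or.inl (by simp)))⟩
      · subst h
        simp only [Set.mem_singleton_iff] at ha0; subst ha0
        right; exact ⟨a, Or.inr (Or.inr (Or.inr (by simp)))⟩
  · rintro (⟨r, hr, a, ha, rfl⟩ | ⟨a, rfl | rfl | rfl | rfl⟩)
    · right
      refine ⟨⟨TAtom.base '' r.head, TAtom.base '' r.pos ∪ TAtom.f '' r.neg, ∅⟩,
        Or.inl ⟨r, hr, rfl⟩, TAtom.base a, by simp [ha], ?_⟩
      simp [ha]
    · right
      refine ⟨⟨{TAtom.t a, TAtom.f a}, ∅, ∅⟩, Or.inr ⟨a, Or.inl rfl⟩, TAtom.t a, by simp, ?_⟩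
      have : ({TAtom.t a, TAtom.f a} : Set (TAtom A)) \ {TAtom.t a} = {TAtom.f a} := by
        ext x; simp
      simp [this]
    · right
      refine ⟨⟨{TAtom.t a, TAtom.f a}, ∅, ∅⟩, Or.inr ⟨a, Or.inl rfl⟩, TAtom.f a, by simp, ?_⟩
      have : ({TAtom.t a, TAtom.f a} : Set (TAtom A)) \ {TAtom.f a} = {TAtom.t a} := by
        ext x; simp
      simp [this]
    · right
      refine ⟨⟨{TAtom.t a}, {TAtom.base a}, ∅⟩, Or.inr ⟨a, Or.inr (Or.inl rfl)⟩,
        TAtom.t a, by simp, by simp⟩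
    · right
      refine ⟨⟨{TAtom.fail}, {TAtom.t a}, {TAtom.base a}⟩, Or.inr ⟨a, Or.inr (Or.inr rfl)⟩,
        TAtom.fail, by simp, by simp⟩

/-- Least-fixpoint derivability of base atoms of `P` given facts `F` (where the
f-atoms in `F` serve as the assumed negative information). -/
inductive Deriv (P : Program A) (F : Set (TAtom A)) : A → Prop
  | fact (a : A) : TAtom.base a ∈ F → Deriv P F a
  | rule (r : Rule A) (a : A) : r ∈ P → a ∈ r.head →
      (∀ b ∈ r.pos, Deriv P F b) → (∀ c ∈ r.neg, TAtom.f c ∈ F) → Deriv P F a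

def tIn (P : Program A) (F : Set (TAtom A)) (a : A) : Prop :=
  TAtom.t a ∈ F ∨ Deriv P F a ∨ TAtom.f a ∉ F

/-- The canonical answer set of `shiftProg (trProg P) ∪ factsOf F`. -/
def superM (P : Program A) (F : Set (TAtom A)) : Set (TAtom A) :=
  fun x => match x with
  | TAtom.base a => Deriv P F a
  | TAtom.t a => tIn P F a
  | TAtom.f a => TAtom.f a ∈ F
  | TAtom.fail => TAtom.fail ∈ F ∨ ∃ a, tIn P F a ∧ ¬ Deriv P F a

/-- Mixed interpretation used in minimality arguments. -/
def mixM (N S : Set A) : Set (TAtom A) :=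
  fun x => match x with
  | TAtom.base a => a ∈ N
  | TAtom.t a => a ∈ S
  | TAtom.f a => a ∉ S
  | TAtom.fail => False

lemma derive_single {B : Type} {Pr : Program B} {M N : Set B}
    (h : isModel (reduct Pr M) N) {x : B} {pos neg : Set B}
    (hr : (⟨{x}, pos, neg⟩ : Rule B) ∈ Pr) (hneg : neg ∩ M = ∅) (hpos : pos ⊆ N) :
    x ∈ N := by
  have hs := h ⟨{x}, pos, ∅⟩ ⟨⟨{x}, pos, neg⟩, hr, hneg, rfl⟩
  obtain ⟨y, hy1, hy2⟩ := hs hpos (Set.empty_inter N)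
  rw [Set.mem_singleton_iff] at hy1
  exact hy1 ▸ hy2

lemma fact_mem {B : Type} (F : Set B) {x : B} (hx : x ∈ F) :
    (⟨{x}, ∅, ∅⟩ : Rule B) ∈ factsOf F := ⟨x, hx, rfl⟩

section Qrules

variable (P : Program A)

lemma qruleP (hn : ∀ r ∈ P, ∃ a, r.head = {a}) {r : Rule A} (hr : r ∈ P) {a : A} (ha : r.head = {a}) :
    (⟨{TAtom.base a}, TAtom.base '' r.pos ∪ TAtom.f '' r.neg, ∅⟩ : Rule (TAtom A)) ∈
      shiftProg (trProg P) :=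
  (mem_shift_tr P hn _).mpr (Or.inl ⟨r, hr, a, ha, rfl⟩)

lemma qrule_tnf (hn : ∀ r ∈ P, ∃ a, r.head = {a}) (a : A) :
    (⟨{TAtom.t a}, ∅, {TAtom.f a}⟩ : Rule (TAtom A)) ∈ shiftProg (trProg P) :=
  (mem_shift_tr P hn _).mpr (Or.inr ⟨a, Or.inl rfl⟩)

lemma qrule_fnt (hn : ∀ r ∈ P, ∃ a, r.head = {a}) (a : A) :
    (⟨{TAtom.f a}, ∅, {TAtom.t a}⟩ : Rule (TAtom A)) ∈ shiftProg (trProg P) :=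
  (mem_shift_tr P hn _).mpr (Or.inr ⟨a, Or.inr (Or.inl rfl)⟩)

lemma qrule_tb (hn : ∀ r ∈ P, ∃ a, r.head = {a}) (a : A) :
    (⟨{TAtom.t a}, {TAtom.base a}, ∅⟩ : Rule (TAtom A)) ∈ shiftProg (trProg P) :=
  (mem_shift_tr P hn _).mpr (Or.inr ⟨a, Or.inr (Or.inr (Or.inl rfl))⟩)

lemma qrule_fail (hn : ∀ r ∈ P, ∃ a, r.head = {a}) (a : A) :
    (⟨{TAtom.fail}, {TAtom.t a}, {TAtom.base a}⟩ : Rule (TAtom A)) ∈ shiftProg (trProg P) :=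
  (mem_shift_tr P hn _).mpr (Or.inr ⟨a, Or.inr (Or.inr (Or.inr rfl))⟩)

end Qrules

lemma superM_answer (P : Program A) (hn : ∀ r ∈ P, ∃ a, r.head = {a})
    (F : Set (TAtom A)) :
    isAnswerSet (shiftProg (trProg P) ∪ factsOf F) (superM P F) := by
  constructor
  · rintro r'' ⟨r, hr, hneg, rfl⟩
    rcases hr with hQ | ⟨x, hx, rfl⟩
    · rcases (mem_shift_tr P hn r).mp hQ with ⟨r0, hr0, a, ha, rfl⟩ | ⟨a, rfl | rfl | rfl | rfl⟩
      · intro hpos _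
        refine ⟨TAtom.base a, rfl, ?_⟩
        show Deriv P F a
        refine Deriv.rule r0 a hr0 (by rw [ha]; exact rfl) ?_ ?_
        · intro b hb
          exact hpos (Set.mem_union_left _ ⟨b, hb, rfl⟩)
        · intro c hc
          exact hpos (Set.mem_union_right _ ⟨c, hc, rfl⟩)
      · intro _ _
        have hfa : TAtom.f a ∉ superM P F := by
          rw [Set.singleton_inter_eq_empty] at hneg; exact hneg
        exact ⟨TAtom.t a, rfl, Or.inr (Or.inr hfa)⟩
      · intro _ _
        have hta : TAtom.t a ∉ superM P F := by
          rw [Set.singleton_inter_eq_empty] at hneg; exact hneg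
        have : ¬ tIn P F a := hta
        rw [tIn] at this; push_neg at this
        exact ⟨TAtom.f a, rfl, this.2.2⟩
      · intro hpos _
        have hb := hpos (Set.mem_singleton (TAtom.base a))
        exact ⟨TAtom.t a, rfl, Or.inr (Or.inl (hb : Deriv P F a))⟩
      · intro hpos _
        have hnd : ¬ Deriv P F a := by
          rw [Set.singleton_inter_eq_empty] at hneg; exact hneg
        have ht0 := hpos (Set.mem_singleton (TAtom.t a))
        have ht : tIn P F a := ht0
        exact ⟨TAtom.fail, rfl, Or.inr ⟨a, ht, hnd⟩⟩
    · intro _ _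
      refine ⟨x, rfl, ?_⟩
      cases x with
      | base a => exact Deriv.fact a hx
      | t a => exact Or.inl hx
      | f a => exact hx
      | fail => exact Or.inl hx
  · intro N hNsub hNmod
    have hF : ∀ x ∈ F, x ∈ N := fun x hx =>
      derive_single hNmod (Or.inr (fact_mem F hx)) (Set.empty_inter _) (Set.empty_subset _)
    have hD : ∀ a, Deriv P F a → TAtom.base a ∈ N := by
      intro a hd
      induction hd with
      | fact a ha => exact hF _ ha
      | rule r a hrP hah hpos hnegF ih =>
        obtain ⟨a', ha'⟩ := hn r hrP
        rw [ha', Set.mem_singleton_iff] at hah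
        subst hah
        refine derive_single hNmod (Or.inl (qruleP P hn hrP ha')) (Set.empty_inter _) ?_
        rintro x (⟨b, hb, rfl⟩ | ⟨c, hc, rfl⟩)
        · exact ih b hb
        · exact hF _ (hnegF c hc)
    have htN : ∀ a, tIn P F a → TAtom.t a ∈ N := by
      intro a ht
      rcases ht with h | h | h
      · exact hF _ h
      · refine derive_single hNmod (Or.inl (qrule_tb P hn a)) (Set.empty_inter _) ?_
        intro x hxm; rw [Set.mem_singleton_iff] at hxm; exact hxm ▸ hD a h
      · refine derive_single hNmod (Or.inl (qrule_tnf P hn a)) ?_ (Set.empty_subset _)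
        rw [Set.singleton_inter_eq_empty]
        exact h
    refine Set.Subset.antisymm hNsub ?_
    intro x hx
    cases x with
    | base a => exact hD a hx
    | t a => exact htN a hx
    | f a => exact hF _ hx
    | fail =>
      rcases hx with h | ⟨a, ht, hnd⟩
      · exact hF _ h
      · refine derive_single hNmod (Or.inl (qrule_fail P hn a)) ?_ ?_
        · rw [Set.singleton_inter_eq_empty]; exact hnd
        · intro x hxm; rw [Set.mem_singleton_iff] at hxm; exact hxm ▸ htN a ht

lemma canon_answer (P : Program A) (hn : ∀ r ∈ P, ∃ a, r.head = {a})
    {S : Set A} (hS : isAnswerSet P S) :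
    isAnswerSet (shiftProg (trProg P)) (mixM S S) := by
  constructor
  · rintro r'' ⟨r, hr, hneg, rfl⟩
    rcases (mem_shift_tr P hn r).mp hr with ⟨r0, hr0, a, ha, rfl⟩ | ⟨a, rfl | rfl | rfl | rfl⟩
    · intro hpos _
      have hposS : r0.pos ⊆ S := fun b hb => hpos (Set.mem_union_left _ ⟨b, hb, rfl⟩)
      have hnegS : r0.neg ∩ S = ∅ := by
        rw [Set.eq_empty_iff_forall_notMem]
        rintro c ⟨hc, hcS⟩
        exact (hpos (Set.mem_union_right _ ⟨c, hc, rfl⟩) : c ∉ S) hcS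
      have := hS.1 ⟨r0.head, r0.pos, ∅⟩ ⟨r0, hr0, hnegS, rfl⟩ hposS (Set.empty_inter _)
      obtain ⟨y, hy1, hy2⟩ := this
      rw [ha, Set.mem_singleton_iff] at hy1
      exact ⟨TAtom.base a, rfl, hy1 ▸ hy2⟩
    · intro _ _
      have : TAtom.f a ∉ mixM S S := by
        rw [Set.singleton_inter_eq_empty] at hneg; exact hneg
      have haS : a ∈ S := not_not.mp this
      exact ⟨TAtom.t a, rfl, haS⟩
    · intro _ _
      have : TAtom.t a ∉ mixM S S := by
        rw [Set.singleton_inter_eq_empty] at hneg; exact hneg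
      exact ⟨TAtom.f a, rfl, this⟩
    · intro hpos _
      have hb := hpos (Set.mem_singleton (TAtom.base a))
      exact ⟨TAtom.t a, rfl, (hb : a ∈ S)⟩
    · intro hpos _
      have hnot : TAtom.base a ∉ mixM S S := by
        rw [Set.singleton_inter_eq_empty] at hneg; exact hneg
      have hb := hpos (Set.mem_singleton (TAtom.t a))
      exact absurd (hb : a ∈ S) hnot
  · intro N hNsub hNmod
    have hfN : ∀ a, a ∉ S → TAtom.f a ∈ N := by
      intro a ha
      refine derive_single hNmod (qrule_fnt P hn a) ?_ (Set.empty_subset _)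
      rw [Set.singleton_inter_eq_empty]
      exact ha
    have hNbmod : isModel (reduct P S) {a | TAtom.base a ∈ N} := by
      rintro r' ⟨r0, hr0, hnegS, rfl⟩
      obtain ⟨a, ha⟩ := hn r0 hr0
      intro hpos _
      refine ⟨a, by rw [ha]; exact rfl, ?_⟩
      show TAtom.base a ∈ N
      refine derive_single hNmod (qruleP P hn hr0 ha) (Set.empty_inter _) ?_
      rintro x (⟨b, hb, rfl⟩ | ⟨c, hc, rfl⟩)
      · exact hpos hb
      · refine hfN c ?_
        rw [Set.eq_empty_iff_forall_notMem] at hnegS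
        exact fun hcS => hnegS c ⟨hc, hcS⟩
    have hNbeq : {a | TAtom.base a ∈ N} = S :=
      hS.2 _ (fun a ha => hNsub ha) hNbmod
    refine Set.Subset.antisymm hNsub ?_
    intro x hx
    cases x with
    | base a =>
      have hmem : a ∈ {a | TAtom.base a ∈ N} := by rw [hNbeq]; exact hx
      exact hmem
    | t a =>
      have hb : a ∈ {a | TAtom.base a ∈ N} := by rw [hNbeq]; exact hx
      refine derive_single hNmod (qrule_tb P hn a) (Set.empty_inter _) ?_
      intro y hy; rw [Set.mem_singleton_iff] at hy; exact hy ▸ hb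
    | f a => exact hfN a hx
    | fail => exact absurd hx id

lemma back_answer (P : Program A) (hn : ∀ r ∈ P, ∃ a, r.head = {a})
    {M : Set (TAtom A)} (hM : isAnswerSet (shiftProg (trProg P)) M)
    (hfail : TAtom.fail ∉ M) : isAnswerSet P (TAtom.base ⁻¹' M) := by
  have hQmod := hM.1
  have h_tb : ∀ a, TAtom.base a ∈ M → TAtom.t a ∈ M := by
    intro a h
    refine derive_single hQmod (qrule_tb P hn a) (Set.empty_inter _) ?_
    intro y hy; rw [Set.mem_singleton_iff] at hy; exact hy ▸ h
  have h_bt : ∀ a, TAtom.t a ∈ M → TAtom.base a ∈ M := by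
    intro a h
    by_contra hb
    refine hfail (derive_single hQmod (qrule_fail P hn a) ?_ ?_)
    · rw [Set.singleton_inter_eq_empty]; exact hb
    · intro y hy; rw [Set.mem_singleton_iff] at hy; exact hy ▸ h
  have h_tf : ∀ a, TAtom.t a ∉ M → TAtom.f a ∈ M := by
    intro a h
    refine derive_single hQmod (qrule_fnt P hn a) ?_ (Set.empty_subset _)
    rw [Set.singleton_inter_eq_empty]; exact h
  have key : ∀ a, TAtom.t a ∈ M → TAtom.f a ∉ M := by
    have hNsub : {x ∈ M | ∀ a, x = TAtom.f a → TAtom.t a ∉ M} ⊆ M := fun x hx => hx.1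
    have hNmod : isModel (reduct (shiftProg (trProg P)) M)
        {x ∈ M | ∀ a, x = TAtom.f a → TAtom.t a ∉ M} := by
      rintro r'' ⟨r, hr, hneg, rfl⟩
      rcases (mem_shift_tr P hn r).mp hr with ⟨r0, hr0, a, ha, rfl⟩ | ⟨a, rfl | rfl | rfl | rfl⟩
      · intro hpos _
        have hbM : TAtom.base a ∈ M :=
          derive_single hQmod (qruleP P hn hr0 ha) hneg (fun y hy => (hpos hy).1)
        exact ⟨TAtom.base a, rfl, hbM, fun a' h => by cases h⟩
      · intro _ _
        have hfa : TAtom.f a ∉ M := by rw [Set.singleton_inter_eq_empty] at hneg; exact hneg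
        have htM : TAtom.t a ∈ M := by
          refine derive_single hQmod (qrule_tnf P hn a) ?_ (Set.empty_subset _)
          rw [Set.singleton_inter_eq_empty]; exact hfa
        exact ⟨TAtom.t a, rfl, htM, fun a' h => by cases h⟩
      · intro _ _
        have htM : TAtom.t a ∉ M := by rw [Set.singleton_inter_eq_empty] at hneg; exact hneg
        refine ⟨TAtom.f a, rfl, h_tf a htM, ?_⟩
        intro a' h
        injection h with h'
        exact h' ▸ htM
      · intro hpos _
        have hb : TAtom.base a ∈ M := (hpos (Set.mem_singleton _)).1
        exact ⟨TAtom.t a, rfl, h_tb a hb, fun a' h => by cases h⟩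
      · intro hpos _
        have ht : TAtom.t a ∈ M := (hpos (Set.mem_singleton _)).1
        have hb : TAtom.base a ∉ M := by
          rw [Set.singleton_inter_eq_empty] at hneg; exact hneg
        exact absurd (h_bt a ht) hb
    have heq := hM.2 _ hNsub hNmod
    intro a hta hfa
    have hmem : TAtom.f a ∈ {x ∈ M | ∀ a, x = TAtom.f a → TAtom.t a ∉ M} := by
      rw [heq]; exact hfa
    exact hmem.2 a rfl hta
  have hf_iff : ∀ a, TAtom.f a ∈ M ↔ TAtom.base a ∉ M := by
    intro a
    constructor
    · intro h hb
      exact key a (h_tb a hb) h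
    · intro hb
      exact h_tf a (fun ht => hb (h_bt a ht))
  constructor
  · rintro r' ⟨r0, hr0, hnegS, rfl⟩
    obtain ⟨a, ha⟩ := hn r0 hr0
    intro hpos _
    refine ⟨a, by rw [ha]; exact rfl, ?_⟩
    show TAtom.base a ∈ M
    refine derive_single hQmod (qruleP P hn hr0 ha) (Set.empty_inter _) ?_
    rintro x (⟨b, hb, rfl⟩ | ⟨c, hc, rfl⟩)
    · exact hpos hb
    · refine (hf_iff c).mpr ?_
      rw [Set.eq_empty_iff_forall_notMem] at hnegS
      exact fun hcM => hnegS c ⟨hc, hcM⟩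
  · intro N hNS hNmod
    have hN'sub : mixM N (TAtom.base ⁻¹' M) ⊆ M := by
      intro x hx
      cases x with
      | base a => exact hNS hx
      | t a => exact h_tb a hx
      | f a => exact (hf_iff a).mpr hx
      | fail => exact absurd hx id
    have hN'mod : isModel (reduct (shiftProg (trProg P)) M) (mixM N (TAtom.base ⁻¹' M)) := by
      rintro r'' ⟨r, hr, hneg, rfl⟩
      rcases (mem_shift_tr P hn r).mp hr with ⟨r0, hr0, a, ha, rfl⟩ | ⟨a, rfl | rfl | rfl | rfl⟩
      · intro hpos _
        have hposN : r0.pos ⊆ N := fun b hb => hpos (Set.mem_union_left _ ⟨b, hb, rfl⟩)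
        have hnegS : r0.neg ∩ (TAtom.base ⁻¹' M) = ∅ := by
          rw [Set.eq_empty_iff_forall_notMem]
          rintro c ⟨hc, hcS⟩
          exact (hpos (Set.mem_union_right _ ⟨c, hc, rfl⟩) : c ∉ TAtom.base ⁻¹' M) hcS
        have := hNmod ⟨r0.head, r0.pos, ∅⟩ ⟨r0, hr0, hnegS, rfl⟩ hposN (Set.empty_inter _)
        obtain ⟨y, hy1, hy2⟩ := this
        rw [ha, Set.mem_singleton_iff] at hy1
        exact ⟨TAtom.base a, rfl, (hy1 ▸ hy2 : a ∈ N)⟩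
      · intro _ _
        have hfa : TAtom.f a ∉ M := by rw [Set.singleton_inter_eq_empty] at hneg; exact hneg
        have hb : TAtom.base a ∈ M := by
          by_contra hb; exact hfa ((hf_iff a).mpr hb)
        exact ⟨TAtom.t a, rfl, (hb : a ∈ TAtom.base ⁻¹' M)⟩
      · intro _ _
        have hta : TAtom.t a ∉ M := by rw [Set.singleton_inter_eq_empty] at hneg; exact hneg
        have hb : TAtom.base a ∉ M := fun hb => hta (h_tb a hb)
        exact ⟨TAtom.f a, rfl, (hb : a ∉ TAtom.base ⁻¹' M)⟩
      · intro hpos _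
        have hb := hpos (Set.mem_singleton (TAtom.base a))
        exact ⟨TAtom.t a, rfl, (hNS (hb : a ∈ N) : a ∈ TAtom.base ⁻¹' M)⟩
      · intro hpos _
        have ht := hpos (Set.mem_singleton (TAtom.t a))
        have hb : TAtom.base a ∉ M := by
          rw [Set.singleton_inter_eq_empty] at hneg; exact hneg
        exact absurd (ht : a ∈ TAtom.base ⁻¹' M) hb
    have heq := hM.2 _ hN'sub hN'mod
    refine Set.Subset.antisymm hNS ?_
    intro a ha
    have hmem : TAtom.base a ∈ mixM N (TAtom.base ⁻¹' M) := by rw [heq]; exact ha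
    exact hmem

end Aux

/-- For a normal program P, the shifted transformation tr(P)^→ is a super-coherent
normal program with AS(P) = { M ∩ 𝒰 : M ∈ AS(tr(P)^→), fail ∉ M }. -/
theorem trProg_shift_normal_superCoherent {A : Type} (P : Program A)
    (hnormal : ∀ r ∈ P, ∃ a, r.head = {a}) :
    (∀ r ∈ shiftProg (trProg P), r.head.Subsingleton) ∧
    superCoherent (shiftProg (trProg P)) ∧
    (∀ S : Set A, isAnswerSet P S ↔
      ∃ M : Set (TAtom A), isAnswerSet (shiftProg (trProg P)) M ∧ TAtom.fail ∉ M ∧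
        S = TAtom.base ⁻¹' M) := by
  refine ⟨?_, ?_, ?_⟩
  · intro r hr
    rcases (mem_shift_tr P hnormal r).mp hr with ⟨r0, _, a, _, rfl⟩ | ⟨a, rfl | rfl | rfl | rfl⟩
    all_goals exact Set.subsingleton_singleton
  · intro F
    exact ⟨superM P F, superM_answer P hnormal F⟩
  · intro S
    constructor
    · intro hS
      refine ⟨mixM S S, canon_answer P hnormal hS, fun h => h, ?_⟩
      rfl
    · rintro ⟨M, hM, hfail, rfl⟩
      exact back_answer P hnormal hM hfail
end

section
/- For a program P over 𝒰 and a query atom q ∈ 𝒰, q is bravely true for P if and only if the fresh atom q' is bravely true for the program tr(P) ∪ { q' ← q, not fail }, and q is cautiously true for P if and only if q' is cautiously true for tr(P) ∪ { q' ← q ; q' ← fail }. -/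
/-- Atoms of the transformed program, extended by a fresh query atom q'. -/
inductive QAtom (A : Type) : Type
  | base : A → QAtom A
  | t : A → QAtom A
  | f : A → QAtom A
  | fail : QAtom A
  | qp : QAtom A

/-- The transformation tr(P) over the extended atom alphabet (q' unused in tr(P)). -/
def trProgQ {A : Type} (P : Program A) : Program (QAtom A) :=
  {r' | ∃ r ∈ P, r' = ⟨QAtom.base '' r.head, QAtom.base '' r.pos ∪ QAtom.f '' r.neg, ∅⟩} ∪
  {r' | ∃ a : A, r' = ⟨{QAtom.t a, QAtom.f a}, ∅, ∅⟩ ∨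
        r' = ⟨{QAtom.t a}, {QAtom.base a}, ∅⟩ ∨
        r' = ⟨{QAtom.fail}, {QAtom.t a}, {QAtom.base a}⟩}

def braveTrue {A : Type} (P : Program A) (q : A) : Prop :=
  ∃ M, isAnswerSet P M ∧ q ∈ M

def cautiouslyTrue {A : Type} (P : Program A) (q : A) : Prop :=
  ∀ M, isAnswerSet P M → q ∈ M

section AuxQS

variable {A : Type}

lemma isModel_reduct_iff {P : Program A} {K I : Set A} :
    isModel (reduct P K) I ↔
      ∀ r ∈ P, r.neg ∩ K = ∅ → r.pos ⊆ I → (r.head ∩ I).Nonempty := by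
  constructor
  · intro h r hr hneg hpos
    exact h ⟨r.head, r.pos, ∅⟩ ⟨r, hr, hneg, rfl⟩ hpos (Set.empty_inter I)
  · rintro h r' ⟨r, hr, hneg, rfl⟩ hpos _
    exact h r hr hneg hpos

lemma isAnswerSet_iff {P : Program A} {M : Set A} :
    isAnswerSet P M ↔
      (∀ r ∈ P, r.neg ∩ M = ∅ → r.pos ⊆ M → (r.head ∩ M).Nonempty) ∧
      (∀ N ⊆ M, (∀ r ∈ P, r.neg ∩ M = ∅ → r.pos ⊆ N → (r.head ∩ N).Nonempty) → N = M) := by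
  unfold isAnswerSet
  rw [isModel_reduct_iff]
  constructor <;> rintro ⟨h1, h2⟩ <;> refine ⟨h1, fun N hN hmod => h2 N hN ?_⟩
  · exact isModel_reduct_iff.2 hmod
  · exact isModel_reduct_iff.1 hmod

def liftQ (M : Set A) : Set (QAtom A) :=
  QAtom.base '' M ∪ QAtom.t '' M ∪ QAtom.f '' Mᶜ

@[simp] lemma base_mem_liftQ {M : Set A} {a : A} : QAtom.base a ∈ liftQ M ↔ a ∈ M := by
  simp [liftQ]

@[simp] lemma t_mem_liftQ {M : Set A} {a : A} : QAtom.t a ∈ liftQ M ↔ a ∈ M := by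
  simp [liftQ]

@[simp] lemma f_mem_liftQ {M : Set A} {a : A} : QAtom.f a ∈ liftQ M ↔ a ∉ M := by
  simp [liftQ]

@[simp] lemma fail_not_mem_liftQ {M : Set A} : QAtom.fail ∉ liftQ M := by
  simp [liftQ]

@[simp] lemma qp_not_mem_liftQ {M : Set A} : QAtom.qp ∉ liftQ M := by
  simp [liftQ]

/-- Lifting an answer set of `P` (plus possibly the fresh atom `qp`)
gives an answer set of `trProgQ P ∪ E` for suitable query programs `E`. -/
lemma liftQ_answerSet {P : Program A} {M : Set A} (hM : isAnswerSet P M)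
    (E : Program (QAtom A)) (X : Set (QAtom A)) (hX : X ⊆ {QAtom.qp})
    (hE : ∀ e ∈ E, e.head = {QAtom.qp})
    (hsat : ∀ e ∈ E, e.neg ∩ (liftQ M ∪ X) = ∅ → e.pos ⊆ liftQ M ∪ X → QAtom.qp ∈ X)
    (hmin : QAtom.qp ∈ X → ∃ e ∈ E, e.neg ∩ (liftQ M ∪ X) = ∅ ∧ e.pos ⊆ liftQ M) :
    isAnswerSet (trProgQ P ∪ E) (liftQ M ∪ X) := by
  rw [isAnswerSet_iff] at hM ⊢
  obtain ⟨hMmod, hMmin⟩ := hM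
  set Ms : Set (QAtom A) := liftQ M ∪ X with hMs
  have hXmem : ∀ x ∈ X, x = QAtom.qp := fun x hx => hX hx
  have hbase : ∀ a : A, QAtom.base a ∈ Ms ↔ a ∈ M := by
    intro a
    constructor
    · rintro (h | h)
      · exact base_mem_liftQ.1 h
      · exact absurd (hXmem _ h) (by simp)
    · intro h; exact Or.inl (base_mem_liftQ.2 h)
  have ht : ∀ a : A, QAtom.t a ∈ Ms ↔ a ∈ M := by
    intro a
    constructor
    · rintro (h | h)
      · exact t_mem_liftQ.1 h
      · exact absurd (hXmem _ h) (by simp)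
    · intro h; exact Or.inl (t_mem_liftQ.2 h)
  have hfm : ∀ a : A, QAtom.f a ∈ Ms ↔ a ∉ M := by
    intro a
    constructor
    · rintro (h | h)
      · exact f_mem_liftQ.1 h
      · exact absurd (hXmem _ h) (by simp)
    · intro h; exact Or.inl (f_mem_liftQ.2 h)
  have hfail : QAtom.fail ∉ Ms := by
    rintro (h | h)
    · exact fail_not_mem_liftQ h
    · exact absurd (hXmem _ h) (by simp)
  constructor
  · -- model part
    rintro r' ((⟨r, hr, rfl⟩ | ⟨a, rfl | rfl | rfl⟩) | he) hneg hpos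
    · -- translated program rule
      simp only [Set.union_subset_iff] at hpos
      have hposM : r.pos ⊆ M := by
        intro a ha
        exact (hbase a).1 (hpos.1 ⟨a, ha, rfl⟩)
      have hnegM : r.neg ∩ M = ∅ := by
        rw [Set.eq_empty_iff_forall_notMem]
        rintro a ⟨ha, haM⟩
        exact (hfm a).1 (hpos.2 ⟨a, ha, rfl⟩) haM
      obtain ⟨h, hh, hhM⟩ := hMmod r hr hnegM hposM
      exact ⟨QAtom.base h, ⟨h, hh, rfl⟩, (hbase h).2 hhM⟩
    · -- guess rule {t a, f a} ←
      by_cases haM : a ∈ M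
      · exact ⟨QAtom.t a, by simp, (ht a).2 haM⟩
      · exact ⟨QAtom.f a, by simp, (hfm a).2 haM⟩
    · -- t a ← base a
      have : a ∈ M := (hbase a).1 (hpos rfl)
      exact ⟨QAtom.t a, rfl, (ht a).2 this⟩
    · -- fail ← t a, not base a
      have haM : a ∈ M := (ht a).1 (hpos rfl)
      exfalso
      rw [Set.eq_empty_iff_forall_notMem] at hneg
      exact hneg (QAtom.base a) ⟨rfl, (hbase a).2 haM⟩
    · -- query rule
      have := hsat _ he hneg hpos
      refine ⟨QAtom.qp, ?_, Or.inr this⟩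
      rw [hE _ he]; rfl
  · -- minimality
    intro N' hsub hNmod
    set N : Set A := {a | QAtom.base a ∈ N'} with hNdef
    have hNM : N ⊆ M := fun a ha => (hbase a).1 (hsub ha)
    have hfN : ∀ a ∉ M, QAtom.f a ∈ N' := by
      intro a haM
      obtain ⟨w, hw, hwN⟩ := hNmod ⟨{QAtom.t a, QAtom.f a}, ∅, ∅⟩
        (Or.inl (Or.inr ⟨a, Or.inl rfl⟩)) (Set.empty_inter _) (Set.empty_subset _)
      rcases hw with rfl | rfl
      · exact absurd ((ht a).1 (hsub hwN)) haM
      · exact hwN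
    have hNmodP : ∀ r ∈ P, r.neg ∩ M = ∅ → r.pos ⊆ N → (r.head ∩ N).Nonempty := by
      intro r hr hneg hpos
      have hposN' : (QAtom.base '' r.pos ∪ QAtom.f '' r.neg) ⊆ N' := by
        rintro x (⟨a, ha, rfl⟩ | ⟨a, ha, rfl⟩)
        · exact hpos ha
        · refine hfN a fun haM => ?_
          rw [Set.eq_empty_iff_forall_notMem] at hneg
          exact hneg a ⟨ha, haM⟩
      obtain ⟨w, ⟨h, hh, rfl⟩, hwN⟩ := hNmod
        ⟨QAtom.base '' r.head, QAtom.base '' r.pos ∪ QAtom.f '' r.neg, ∅⟩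
        (Or.inl (Or.inl ⟨r, hr, rfl⟩)) (Set.empty_inter _) hposN'
      exact ⟨h, hh, hwN⟩
    have hNeq : N = M := hMmin N hNM hNmodP
    have hliftsub : liftQ M ⊆ N' := by
      rintro x ((⟨a, ha, rfl⟩ | ⟨a, ha, rfl⟩) | ⟨a, ha, rfl⟩)
      · rw [← hNeq] at ha; exact ha
      · obtain ⟨w, hw, hwN⟩ := hNmod ⟨{QAtom.t a}, {QAtom.base a}, ∅⟩
          (Or.inl (Or.inr ⟨a, Or.inr (Or.inl rfl)⟩)) (Set.empty_inter _)
          (by rintro x rfl; rw [← hNeq] at ha; exact ha)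
        rcases hw with rfl
        exact hwN
      · exact hfN a ha
    have hXsub : X ⊆ N' := by
      intro x hx
      rcases hXmem x hx with rfl
      obtain ⟨e, he, hneg, hpos⟩ := hmin hx
      obtain ⟨w, hw, hwN⟩ := hNmod e (Or.inr he) hneg
        (fun y hy => hliftsub (hpos hy))
      rw [hE _ he] at hw
      rcases hw with rfl
      exact hwN
    exact Set.Subset.antisymm hsub (Set.union_subset hliftsub hXsub)

lemma qp_not_head_tr {P : Program A} {r : Rule (QAtom A)} (hr : r ∈ trProgQ P) :
    QAtom.qp ∉ r.head := by
  rcases hr with ⟨s, _, rfl⟩ | ⟨a, rfl | rfl | rfl⟩ <;> simp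

/-- Projecting a fail-free answer set of `trProgQ P ∪ E` back to `P`. -/
lemma proj_answerSet {P : Program A} (E : Program (QAtom A))
    (hE : ∀ e ∈ E, e.head = {QAtom.qp}) {M' : Set (QAtom A)}
    (hAS : isAnswerSet (trProgQ P ∪ E) M') (hfail : QAtom.fail ∉ M') :
    isAnswerSet P {a | QAtom.base a ∈ M'} := by
  rw [isAnswerSet_iff] at hAS ⊢
  obtain ⟨hmod, hmin⟩ := hAS
  set M : Set A := {a | QAtom.base a ∈ M'} with hMdef
  have ht : ∀ a ∈ M, QAtom.t a ∈ M' := by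
    intro a ha
    obtain ⟨w, hw, hwM⟩ := hmod ⟨{QAtom.t a}, {QAtom.base a}, ∅⟩
      (Or.inl (Or.inr ⟨a, Or.inr (Or.inl rfl)⟩)) (Set.empty_inter _)
      (by rintro x rfl; exact ha)
    rcases hw with rfl; exact hwM
  have htnot : ∀ a ∉ M, QAtom.t a ∉ M' := by
    intro a ha hta
    apply hfail
    obtain ⟨w, hw, hwM⟩ := hmod ⟨{QAtom.fail}, {QAtom.t a}, {QAtom.base a}⟩
      (Or.inl (Or.inr ⟨a, Or.inr (Or.inr rfl)⟩))
      (by rw [Set.eq_empty_iff_forall_notMem]; rintro x ⟨rfl, hx⟩; exact ha hx)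
      (by rintro x rfl; exact hta)
    rcases hw with rfl; exact hwM
  have hf : ∀ a ∉ M, QAtom.f a ∈ M' := by
    intro a ha
    obtain ⟨w, hw, hwM⟩ := hmod ⟨{QAtom.t a, QAtom.f a}, ∅, ∅⟩
      (Or.inl (Or.inr ⟨a, Or.inl rfl⟩)) (Set.empty_inter _) (Set.empty_subset _)
    rcases hw with rfl | rfl
    · exact absurd hwM (htnot a ha)
    · exact hwM
  constructor
  · -- model part
    intro r hr hneg hpos
    obtain ⟨w, ⟨h, hh, rfl⟩, hwM⟩ := hmod
      ⟨QAtom.base '' r.head, QAtom.base '' r.pos ∪ QAtom.f '' r.neg, ∅⟩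
      (Or.inl (Or.inl ⟨r, hr, rfl⟩)) (Set.empty_inter _)
      (by
        rintro x (⟨a, ha, rfl⟩ | ⟨a, ha, rfl⟩)
        · exact hpos ha
        · refine hf a fun haM => ?_
          rw [Set.eq_empty_iff_forall_notMem] at hneg
          exact hneg a ⟨ha, haM⟩)
    exact ⟨h, hh, hwM⟩
  · -- minimality
    intro N hNM hNmod
    set N' : Set (QAtom A) :=
      QAtom.base '' N ∪ QAtom.t '' M ∪ QAtom.f '' Mᶜ ∪ (M' ∩ {QAtom.qp}) with hN'def
    have hbaseN' : ∀ a : A, QAtom.base a ∈ N' ↔ a ∈ N := by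
      intro a
      constructor
      · rintro (((⟨b, hb, hba⟩ | ⟨b, hb, hba⟩) | ⟨b, hb, hba⟩) | ⟨hb1, hb2⟩) <;>
          first
          | (cases hba; exact hb)
          | (exact absurd hba (by simp))
          | (exact absurd hb2 (by simp))
      · intro h; exact Or.inl (Or.inl (Or.inl ⟨a, h, rfl⟩))
    have hfN' : ∀ a : A, QAtom.f a ∈ N' ↔ a ∉ M := by
      intro a
      constructor
      · rintro (((⟨b, hb, hba⟩ | ⟨b, hb, hba⟩) | ⟨b, hb, hba⟩) | ⟨hb1, hb2⟩) <;>
          first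
          | (cases hba; exact hb)
          | (exact absurd hba (by simp))
          | (exact absurd hb2 (by simp))
      · intro h; exact Or.inl (Or.inr ⟨a, h, rfl⟩)
    have htN' : ∀ a : A, QAtom.t a ∈ N' ↔ a ∈ M := by
      intro a
      constructor
      · rintro (((⟨b, hb, hba⟩ | ⟨b, hb, hba⟩) | ⟨b, hb, hba⟩) | ⟨hb1, hb2⟩) <;>
          first
          | (cases hba; exact hb)
          | (exact absurd hba (by simp))
          | (exact absurd hb2 (by simp))
      · intro h; exact Or.inl (Or.inl (Or.inr ⟨a, h, rfl⟩))
    have hfailN' : QAtom.fail ∉ N' := by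
      rintro (((⟨b, hb, hba⟩ | ⟨b, hb, hba⟩) | ⟨b, hb, hba⟩) | ⟨hb1, hb2⟩) <;>
        first
        | (exact absurd hba (by simp))
        | (exact absurd hb2 (by simp))
    have hN'sub : N' ⊆ M' := by
      rintro x (((⟨a, ha, rfl⟩ | ⟨a, ha, rfl⟩) | ⟨a, ha, rfl⟩) | ⟨hx, _⟩)
      · exact hNM ha
      · exact ht a ha
      · exact hf a ha
      · exact hx
    have hN'mod : ∀ r' ∈ trProgQ P ∪ E, r'.neg ∩ M' = ∅ → r'.pos ⊆ N' →
        (r'.head ∩ N').Nonempty := by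
      rintro r' ((⟨r, hr, rfl⟩ | ⟨a, rfl | rfl | rfl⟩) | he) hneg hpos
      · -- translated program rule
        simp only [Set.union_subset_iff] at hpos
        have hposN : r.pos ⊆ N := fun a ha => (hbaseN' a).1 (hpos.1 ⟨a, ha, rfl⟩)
        have hnegM : r.neg ∩ M = ∅ := by
          rw [Set.eq_empty_iff_forall_notMem]
          rintro a ⟨ha, haM⟩
          exact (hfN' a).1 (hpos.2 ⟨a, ha, rfl⟩) haM
        obtain ⟨h, hh, hhN⟩ := hNmod r hr hnegM hposN
        exact ⟨QAtom.base h, ⟨h, hh, rfl⟩, (hbaseN' h).2 hhN⟩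
      · by_cases haM : a ∈ M
        · exact ⟨QAtom.t a, by simp, (htN' a).2 haM⟩
        · exact ⟨QAtom.f a, by simp, (hfN' a).2 haM⟩
      · have : a ∈ N := (hbaseN' a).1 (hpos rfl)
        exact ⟨QAtom.t a, rfl, (htN' a).2 (hNM this)⟩
      · exfalso
        have haM : a ∈ M := (htN' a).1 (hpos rfl)
        rw [Set.eq_empty_iff_forall_notMem] at hneg
        exact hneg (QAtom.base a) ⟨rfl, haM⟩
      · -- query rule
        obtain ⟨w, hw, hwM⟩ := hmod _ (Or.inr he) hneg (fun x hx => hN'sub (hpos hx))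
        rw [hE _ he] at hw
        rcases hw with rfl
        refine ⟨QAtom.qp, ?_, Or.inr ⟨hwM, rfl⟩⟩
        rw [hE _ he]; rfl
    have hN'eq : N' = M' := hmin N' hN'sub hN'mod
    refine Set.Subset.antisymm hNM fun a ha => ?_
    have : QAtom.base a ∈ N' := by rw [hN'eq]; exact ha
    exact (hbaseN' a).1 this

end AuxQS

section AuxQS2

variable {A : Type}

lemma qp_forces {P : Program A} {q : A} {M' : Set (QAtom A)}
    (hAS : isAnswerSet (trProgQ P ∪ {⟨{QAtom.qp}, {QAtom.base q}, {QAtom.fail}⟩}) M')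
    (hqp : QAtom.qp ∈ M') : QAtom.fail ∉ M' ∧ QAtom.base q ∈ M' := by
  rw [isAnswerSet_iff] at hAS
  obtain ⟨hmod, hmin⟩ := hAS
  by_contra hbad
  rw [not_and_or] at hbad
  have hbad' : QAtom.fail ∈ M' ∨ QAtom.base q ∉ M' := by
    rcases hbad with h | h
    · exact Or.inl (not_not.mp h)
    · exact Or.inr h
  set N : Set (QAtom A) := M' \ {QAtom.qp} with hNdef
  have hNsub : N ⊆ M' := Set.diff_subset
  have hNmod : ∀ r' ∈ trProgQ P ∪ {(⟨{QAtom.qp}, {QAtom.base q}, {QAtom.fail}⟩ :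
      Rule (QAtom A))}, r'.neg ∩ M' = ∅ → r'.pos ⊆ N → (r'.head ∩ N).Nonempty := by
    rintro r' (htr | he) hneg hpos
    · obtain ⟨w, hw, hwM⟩ := hmod r' (Or.inl htr) hneg (fun x hx => hNsub (hpos hx))
      refine ⟨w, hw, hwM, ?_⟩
      rintro rfl
      exact qp_not_head_tr htr hw
    · exfalso
      rcases he with rfl
      rcases hbad' with hfl | hbq
      · rw [Set.eq_empty_iff_forall_notMem] at hneg
        exact hneg QAtom.fail ⟨rfl, hfl⟩
      · exact hbq (hNsub (hpos rfl))
  have := hmin N hNsub hNmod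
  rw [← this] at hqp
  exact hqp.2 rfl

end AuxQS2

/-- q is bravely true for P iff q' is bravely true for tr(P) ∪ { q' ← q, not fail },
and q is cautiously true for P iff q' is cautiously true for
tr(P) ∪ { q' ← q ; q' ← fail }. -/
theorem query_simulation {A : Type} (P : Program A)
    (hnc : ∀ r ∈ P, r.head.Nonempty) (q : A) :
    (braveTrue P q ↔
      braveTrue (trProgQ P ∪ {⟨{QAtom.qp}, {QAtom.base q}, {QAtom.fail}⟩}) QAtom.qp) ∧
    (cautiouslyTrue P q ↔
      cautiouslyTrue
        (trProgQ P ∪ {⟨{QAtom.qp}, {QAtom.base q}, ∅⟩, ⟨{QAtom.qp}, {QAtom.fail}, ∅⟩})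
        QAtom.qp) := by
  have hE1 : ∀ e ∈ ({(⟨{QAtom.qp}, {QAtom.base q}, {QAtom.fail}⟩ : Rule (QAtom A))} :
      Program (QAtom A)), e.head = {QAtom.qp} := by rintro e rfl; rfl
  have hE2 : ∀ e ∈ ({(⟨{QAtom.qp}, {QAtom.base q}, ∅⟩ : Rule (QAtom A)),
      ⟨{QAtom.qp}, {QAtom.fail}, ∅⟩} : Program (QAtom A)), e.head = {QAtom.qp} := by
    rintro e (rfl | rfl) <;> rfl
  constructor
  · constructor
    · rintro ⟨M, hM, hq⟩
      refine ⟨liftQ M ∪ {QAtom.qp}, ?_, Or.inr rfl⟩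
      refine liftQ_answerSet hM _ {QAtom.qp} (subset_refl _) hE1 ?_ ?_
      · rintro e rfl _ _; rfl
      · intro _
        refine ⟨_, rfl, ?_, ?_⟩
        · rw [Set.eq_empty_iff_forall_notMem]
          rintro x ⟨rfl, (hx | hx)⟩
          · exact fail_not_mem_liftQ hx
          · exact absurd hx (by simp)
        · rintro x rfl
          exact base_mem_liftQ.2 hq
    · rintro ⟨M', hAS, hqp⟩
      obtain ⟨hfail, hbq⟩ := qp_forces hAS hqp
      exact ⟨_, proj_answerSet _ hE1 hAS hfail, hbq⟩
  · constructor
    · intro hc M' hAS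
      rw [isAnswerSet_iff] at hAS
      obtain ⟨hmod, hmin⟩ := hAS
      by_cases hfail : QAtom.fail ∈ M'
      · obtain ⟨w, hw, hwM⟩ := hmod ⟨{QAtom.qp}, {QAtom.fail}, ∅⟩
          (Or.inr (Or.inr rfl)) (Set.empty_inter _) (by rintro x rfl; exact hfail)
        rcases hw with rfl; exact hwM
      · have hproj := proj_answerSet _ hE2 (isAnswerSet_iff.2 ⟨hmod, hmin⟩) hfail
        have hq : QAtom.base q ∈ M' := hc _ hproj
        obtain ⟨w, hw, hwM⟩ := hmod ⟨{QAtom.qp}, {QAtom.base q}, ∅⟩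
          (Or.inr (Or.inl rfl)) (Set.empty_inter _) (by rintro x rfl; exact hq)
        rcases hw with rfl; exact hwM
    · intro hc M hM
      by_contra hq
      have hAS : isAnswerSet (trProgQ P ∪ {(⟨{QAtom.qp}, {QAtom.base q}, ∅⟩ : Rule (QAtom A)),
          ⟨{QAtom.qp}, {QAtom.fail}, ∅⟩}) (liftQ M) := by
        have := liftQ_answerSet hM ({(⟨{QAtom.qp}, {QAtom.base q}, ∅⟩ : Rule (QAtom A)),
            ⟨{QAtom.qp}, {QAtom.fail}, ∅⟩} : Program (QAtom A)) ∅ (Set.empty_subset _) hE2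
            ?_ ?_
        · rwa [Set.union_empty] at this
        · rintro e (rfl | rfl) _ hpos
          · have h1 : QAtom.base q ∈ liftQ M ∪ (∅ : Set (QAtom A)) := hpos rfl
            rw [Set.union_empty] at h1
            exact absurd (base_mem_liftQ.1 h1) hq
          · have h1 : QAtom.fail ∈ liftQ M ∪ (∅ : Set (QAtom A)) := hpos rfl
            rw [Set.union_empty] at h1
            exact (fail_not_mem_liftQ h1).elim
        · rintro ⟨⟩
      exact qp_not_mem_liftQ (hc _ hAS)
end
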